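/- Let σ > 0 and let X ≥ 0 be a random variable with -(d/ds) log E[e^{-sX}] ≥ μ·e^{-s}·(1 - (e^s - 1)σ) for all s ∈ [0, log(1 + 1/σ)], where μ > 0. Then P(X = 0) ≤ exp(-μ + μσ·log(1 + 1/σ)). -/

import Mathlib

open MeasureTheory

theorem upper_bound_from_log_deriv {Ω : Type*} [MeasurableSpace Ω] (μ : Measure Ω)
    [IsProbabilityMeasure μ] (X : Ω → ℝ) (hXnn : ∀ ω, 0 ≤ X ω)
    (m σ : ℝ) (hm : 0 < m) (hσ : 0 < σ)
    (hderiv : ∀ s ∈ Set.Icc (0:ℝ) (Real.log (1 + 1/σ)), ∃ d : ℝ,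
      HasDerivAt (fun t : ℝ => Real.log (∫ ω, Real.exp (-t * X ω) ∂μ)) d s ∧
        -d ≥ m * Real.exp (-s) * (1 - (Real.exp s - 1) * σ)) :
    μ {ω | X ω = 0} ≤ ENNReal.ofReal (Real.exp (-m + m * σ * Real.log (1 + 1/σ))) := by
  set lam := Real.log (1 + 1/σ) with hlamdef
  have h1σ : (1:ℝ) < 1 + 1/σ := by
    have : 0 < 1/σ := by positivity
    linarith
  have hlampos : 0 < lam := Real.log_pos h1σ
  have hexplam : Real.exp lam = 1 + 1/σ := Real.exp_log (by linarith)
  set f : ℝ → ℝ := fun t => Real.log (∫ ω, Real.exp (-t * X ω) ∂μ) with hfdef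
  -- First: X is a.e. strongly measurable, else contradiction with hderiv.
  have hmeas : AEStronglyMeasurable X μ := by
    by_contra hnm
    -- then for every t ∈ (0, lam), the integral is 0, so f = 0 on (0, lam)
    have hzero : ∀ t ∈ Set.Ioo (0:ℝ) lam, f t = 0 := by
      intro t ht
      have : ¬ AEStronglyMeasurable (fun ω => Real.exp (-t * X ω)) μ := by
        intro h
        apply hnm
        have ht0 : t ≠ 0 := ne_of_gt ht.1
        have : AEStronglyMeasurable
            (fun ω => -Real.log (Real.exp (-t * X ω)) / t) μ := by
          exact (((Real.measurable_log.comp_aemeasurable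
            h.aemeasurable).neg).div_const t).aestronglyMeasurable
        refine this.congr (Filter.Eventually.of_forall fun ω => ?_)
        show -Real.log (Real.exp (-t * X ω)) / t = X ω
        rw [Real.log_exp]
        field_simp
      have hni : ¬ Integrable (fun ω => Real.exp (-t * X ω)) μ := fun h => this h.1
      simp only [hfdef, integral_undef hni, Real.log_zero]
    have hs : lam / 2 ∈ Set.Icc (0:ℝ) lam := ⟨by linarith, by linarith⟩
    obtain ⟨d, hd, hdge⟩ := hderiv (lam/2) hs
    have hdzero : d = 0 := by
      have hev : f =ᶠ[nhds (lam/2)] (fun _ => (0:ℝ)) := by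
        filter_upwards [Ioo_mem_nhds (by linarith : (0:ℝ) < lam/2)
          (by linarith : lam/2 < lam)] with x hx
        exact hzero x hx
      exact hd.unique ((hasDerivAt_const (lam/2) (0:ℝ)).congr_of_eventuallyEq hev)
    have hpos : 0 < m * Real.exp (-(lam/2)) * (1 - (Real.exp (lam/2) - 1) * σ) := by
      have h1 : Real.exp (lam/2) < 1 + 1/σ := by
        rw [← hexplam]; exact Real.exp_lt_exp.2 (by linarith)
      have h2 : (Real.exp (lam/2) - 1) * σ < 1 := by
        have : Real.exp (lam/2) - 1 < 1/σ := by linarith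
        calc (Real.exp (lam/2) - 1) * σ < (1/σ) * σ := by
              exact mul_lt_mul_of_pos_right this hσ
          _ = 1 := by field_simp
      exact mul_pos (mul_pos hm (Real.exp_pos _)) (by linarith)
    rw [hdzero, neg_zero] at hdge
    linarith
  obtain ⟨X', hX'sm, hX'ae⟩ := hmeas
  have hX'meas : Measurable X' := hX'sm.measurable
  -- auxiliary function G with G' s = m*σ - m*(1+σ)*exp(-s)
  set G : ℝ → ℝ := fun t => m * σ * t + m * (1 + σ) * Real.exp (-t) with hGdef
  have hG : ∀ t : ℝ, HasDerivAt G (m * σ - m * (1 + σ) * Real.exp (-t)) t := by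
    intro t
    have h1 : HasDerivAt (fun t : ℝ => m * σ * t) (m * σ) t := by
      simpa using (hasDerivAt_id t).const_mul (m * σ)
    have h2 : HasDerivAt (fun t : ℝ => Real.exp (-t)) (Real.exp (-t) * (-1)) t :=
      (hasDerivAt_neg t).exp
    have h3 := h1.add (h2.const_mul (m * (1 + σ)))
    rw [show m * σ - m * (1 + σ) * Real.exp (-t)
        = m * σ + m * (1 + σ) * (Real.exp (-t) * (-1)) by ring]
    exact h3
  -- h := G - f is monotone on [0, lam]
  have hmono : MonotoneOn (fun t => G t - f t) (Set.Icc 0 lam) := by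
    apply monotoneOn_of_deriv_nonneg (convex_Icc 0 lam)
    · intro x hx
      obtain ⟨d, hd, _⟩ := hderiv x hx
      exact ((hG x).sub hd).continuousAt.continuousWithinAt
    · intro x hx
      rw [interior_Icc] at hx
      obtain ⟨d, hd, _⟩ := hderiv x (Set.mem_Icc_of_Ioo hx)
      exact ((hG x).sub hd).differentiableAt.differentiableWithinAt
    · intro x hx
      rw [interior_Icc] at hx
      obtain ⟨d, hd, hge⟩ := hderiv x (Set.mem_Icc_of_Ioo hx)
      rw [show (fun t => G t - f t) = G - f from rfl, ((hG x).sub hd).deriv]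
      have hx1 : Real.exp x * Real.exp (-x) = 1 := by
        rw [← Real.exp_add]; simp
      have heq : m * Real.exp (-x) * (1 - (Real.exp x - 1) * σ)
          = m * (1 + σ) * Real.exp (-x) - m * σ := by
        linear_combination (-(m*σ)) * hx1
      linarith [hge]
  have hf0 : f 0 = 0 := by
    simp [hfdef]
  have hflam : f lam ≤ -m + m * σ * lam := by
    have := hmono (Set.left_mem_Icc.2 hlampos.le)
      (Set.right_mem_Icc.2 hlampos.le) hlampos.le
    have hne : (1 + σ : ℝ) ≠ 0 := by positivity
    have hGl : G lam = m * σ * lam + m * σ := by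
      have hexp : Real.exp (-lam) = σ / (1 + σ) := by
        rw [Real.exp_neg, hexplam,
          show (1:ℝ) + 1/σ = (1+σ)/σ by
            rw [add_div, div_self hσ.ne']; exact add_comm 1 (1/σ),
          inv_div]
      have e1 : (1 + σ) * (σ / (1 + σ)) = σ := by
        rw [← mul_div_assoc, mul_div_cancel_left₀ _ hne]
      rw [hGdef]
      simp only [hexp, mul_assoc, e1]
    have hG0 : G 0 = m * (1 + σ) := by simp [hGdef]
    dsimp only at this
    rw [hf0, hGl, hG0] at this
    linarith
  -- bound μ {X = 0} by the Laplace transform at lam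
  have hkey : μ {ω | X ω = 0} ≤ ENNReal.ofReal (∫ ω, Real.exp (-lam * X ω) ∂μ) := by
    have hInt' : Integrable (fun ω => Real.exp (-lam * X' ω)) μ := by
      refine Integrable.mono' (integrable_const 1)
        ((hX'meas.const_mul (-lam)).exp.aestronglyMeasurable) ?_
      filter_upwards [hX'ae] with ω hω
      rw [Real.norm_eq_abs, abs_of_pos (Real.exp_pos _), ← hω]
      rw [Real.exp_le_one_iff]
      have := hXnn ω
      nlinarith
    have hset : μ {ω | X ω = 0} ≤ μ {ω | X' ω = 0} := by
      have hsub : {ω | X ω = 0} ⊆ {ω | X' ω = 0} ∪ {ω | X ω ≠ X' ω} := by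
        intro ω hω
        by_cases h : X ω = X' ω
        · left; simp only [Set.mem_setOf_eq] at hω ⊢; rw [← h]; exact hω
        · right; exact h
      calc μ {ω | X ω = 0} ≤ μ ({ω | X' ω = 0} ∪ {ω | X ω ≠ X' ω}) := measure_mono hsub
        _ ≤ μ {ω | X' ω = 0} + μ {ω | X ω ≠ X' ω} := measure_union_le _ _
        _ = μ {ω | X' ω = 0} := by
            rw [Filter.EventuallyEq, ae_iff] at hX'ae
            simp only [hX'ae, add_zero]
    have hlin : μ {ω | X' ω = 0} ≤ ∫⁻ ω, ENNReal.ofReal (Real.exp (-lam * X' ω)) ∂μ := by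
      have hE : MeasurableSet {ω | X' ω = 0} := hX'meas (measurableSet_singleton 0)
      calc μ {ω | X' ω = 0}
          = ∫⁻ ω, {ω | X' ω = 0}.indicator (fun _ => (1:ENNReal)) ω ∂μ := by
            rw [lintegral_indicator hE]; simp
        _ ≤ ∫⁻ ω, ENNReal.ofReal (Real.exp (-lam * X' ω)) ∂μ := by
            refine lintegral_mono fun ω => ?_
            by_cases h : X' ω = 0
            · simp [Set.indicator_of_mem, h, Set.mem_setOf_eq]
            · simp [Set.indicator_of_notMem, h, Set.mem_setOf_eq]
    have heq : ∫⁻ ω, ENNReal.ofReal (Real.exp (-lam * X' ω)) ∂μ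
        = ENNReal.ofReal (∫ ω, Real.exp (-lam * X' ω) ∂μ) := by
      rw [ofReal_integral_eq_lintegral_ofReal hInt'
        (Filter.Eventually.of_forall fun ω => (Real.exp_pos _).le)]
    have hieq : ∫ ω, Real.exp (-lam * X' ω) ∂μ = ∫ ω, Real.exp (-lam * X ω) ∂μ := by
      refine integral_congr_ae ?_
      filter_upwards [hX'ae] with ω hω
      rw [hω]
    calc μ {ω | X ω = 0} ≤ μ {ω | X' ω = 0} := hset
      _ ≤ ∫⁻ ω, ENNReal.ofReal (Real.exp (-lam * X' ω)) ∂μ := hlin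
      _ = ENNReal.ofReal (∫ ω, Real.exp (-lam * X' ω) ∂μ) := heq
      _ = ENNReal.ofReal (∫ ω, Real.exp (-lam * X ω) ∂μ) := by rw [hieq]
  refine hkey.trans (ENNReal.ofReal_le_ofReal ?_)
  set I := ∫ ω, Real.exp (-lam * X ω) ∂μ with hIdef
  rcases le_or_gt I 0 with hI | hI
  · exact hI.trans (Real.exp_pos _).le
  · have : Real.log I ≤ -m + m * σ * lam := hflam
    calc I = Real.exp (Real.log I) := (Real.exp_log hI).symm
      _ ≤ Real.exp (-m + m * σ * lam) := Real.exp_le_exp.2 this
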